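/- arXiv:2507.13872 — 2 statements merged into one kernel-verified Lean document; each statement's English description precedes it below -/
import Mathlib

section
/- Let l : [0,∞) → ℝ be three times differentiable and α > 0. Define h₁ = l′ + αl, h₂ = h₁′ + αh₁, h₃ = h₂′ + αh₂ (so h₃ = l′′′ + 3αl′′ + 3α²l′ + α³l). If h₃(t) ≥ 0 for all t ≥ 0 and l(0) ≥ 0, l′(0) + αl(0) ≥ 0, and l′′(0) + 2αl′(0) + α²l(0) ≥ 0, then l(t) ≥ 0 for all t ≥ 0. -/
lemma first_order_comparison (α : ℝ) (y : ℝ → ℝ) (hy : Differentiable ℝ y)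
    (h : ∀ t, 0 ≤ t → 0 ≤ deriv y t + α * y t) (h0 : 0 ≤ y 0) :
    ∀ t, 0 ≤ t → 0 ≤ y t := by
  intro t ht
  set g : ℝ → ℝ := fun s => Real.exp (α * s) * y s with hg
  have hgd : Differentiable ℝ g :=
    (Real.differentiable_exp.comp ((differentiable_const α).mul differentiable_id)).mul hy
  have hderiv : ∀ s, deriv g s = Real.exp (α * s) * (deriv y s + α * y s) := by
    intro s
    have h1 : HasDerivAt (fun s : ℝ => Real.exp (α * s)) (α * Real.exp (α * s)) s := by
      have := (Real.hasDerivAt_exp (α * s)).comp s ((hasDerivAt_id s).const_mul α)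
      simpa [mul_comm, Function.comp_def] using this
    have h2 : HasDerivAt y (deriv y s) s := (hy s).hasDerivAt
    rw [(h1.fun_mul h2).deriv]; ring
  have hmono : MonotoneOn g (Set.Ici (0:ℝ)) := by
    apply monotoneOn_of_deriv_nonneg (convex_Ici 0) hgd.continuous.continuousOn
      hgd.differentiableOn
    intro s hs
    rw [hderiv]
    exact mul_nonneg (Real.exp_pos _).le (h s (le_of_lt (by simpa using hs)))
  have hge : g 0 ≤ g t := hmono Set.self_mem_Ici (Set.mem_Ici.mpr ht) ht
  have hg0 : 0 ≤ g 0 := by simpa [hg] using h0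
  have hgt : 0 ≤ Real.exp (α * t) * y t := le_trans hg0 hge
  nlinarith [Real.exp_pos (α * t)]

theorem third_order_hocbf_safety
    (α : ℝ) (hα : 0 < α)
    (l : ℝ → ℝ)
    (hl : Differentiable ℝ l) (hl' : Differentiable ℝ (deriv l))
    (hl'' : Differentiable ℝ (deriv (deriv l)))
    (h₁ h₂ h₃ : ℝ → ℝ)
    (hh₁ : ∀ t, h₁ t = deriv l t + α * l t)
    (hh₂ : ∀ t, h₂ t = deriv h₁ t + α * h₁ t)
    (hh₃ : ∀ t, h₃ t = deriv h₂ t + α * h₂ t)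
    (hpos : ∀ t, 0 ≤ t → h₃ t ≥ 0)
    (h0 : l 0 ≥ 0)
    (h1 : deriv l 0 + α * l 0 ≥ 0)
    (h2 : deriv (deriv l) 0 + 2 * α * deriv l 0 + α ^ 2 * l 0 ≥ 0) :
    ∀ t, 0 ≤ t → l t ≥ 0 := by
  have hh₁f : h₁ = fun t => deriv l t + α * l t := funext hh₁
  have hd₁ : Differentiable ℝ h₁ := by
    rw [hh₁f]; exact hl'.add (hl.const_mul α)
  have hdh₁ : ∀ t, deriv h₁ t = deriv (deriv l) t + α * deriv l t := by
    intro t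
    rw [hh₁f]
    rw [deriv_fun_add (hl' t) ((hl.const_mul α) t), deriv_const_mul α (hl t)]
  have hh₂f : h₂ = fun t => deriv h₁ t + α * h₁ t := funext hh₂
  have hdh₁f : deriv h₁ = fun t => deriv (deriv l) t + α * deriv l t := funext hdh₁
  have hd₁' : Differentiable ℝ (deriv h₁) := by
    rw [hdh₁f]; exact hl''.add (hl'.const_mul α)
  have hd₂ : Differentiable ℝ h₂ := by
    rw [hh₂f]; exact hd₁'.add (hd₁.const_mul α)
  -- step 1: h₂ ≥ 0 on [0,∞)
  have step2 : ∀ t, 0 ≤ t → 0 ≤ h₂ t := by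
    apply first_order_comparison α h₂ hd₂
    · intro t ht
      have := hpos t ht
      rw [hh₃ t] at this; linarith
    · rw [hh₂ 0, hdh₁ 0, hh₁ 0]; nlinarith
  -- step 2: h₁ ≥ 0 on [0,∞)
  have step1 : ∀ t, 0 ≤ t → 0 ≤ h₁ t := by
    apply first_order_comparison α h₁ hd₁
    · intro t ht
      have := step2 t ht
      rw [hh₂ t] at this; linarith
    · rw [hh₁ 0]; linarith
  -- step 3: l ≥ 0
  intro t ht
  refine first_order_comparison α l hl ?_ h0 t ht
  intro s hs
  have := step1 s hs
  rw [hh₁ s] at this; linarith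
end

section
/- Let h : ℝⁿ → ℝ be continuously differentiable, and consider the Euler discretization x_{k+1} = x_k + Δt·(f(x_k) + g(x_k)u_k). Suppose along the continuous dynamics ẋ = f(x) + g(x)u the barrier condition ∇h(x)·(f(x) + g(x)u) ≥ −α h(x) holds with α > 0 and αΔt ≤ 1, and suppose ∇h is L-Lipschitz and ‖f(x) + g(x)u_k‖ ≤ M. Then h(x_{k+1}) ≥ (1 − αΔt) h(x_k) − (L M² / 2) Δt². -/
lemma descent_lemma {E : Type*} [NormedAddCommGroup E] [NormedSpace ℝ E]
    (h : E → ℝ) (hC1 : ContDiff ℝ 1 h) (L : ℝ) (hL : 0 ≤ L)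
    (hLip : LipschitzWith L.toNNReal (fun x => fderiv ℝ h x))
    (x v : E) :
    h (x + v) ≥ h x + fderiv ℝ h x v - L * ‖v‖ ^ 2 / 2 := by
  have hdiff : Differentiable ℝ h := hC1.differentiable one_ne_zero
  set c : ℝ := fderiv ℝ h x v with hc
  set ψ : ℝ → ℝ := fun t => h (x + t • v) - t * c + L * ‖v‖ ^ 2 / 2 * t ^ 2 with hψ
  have hder : ∀ t : ℝ, HasDerivAt ψ
      (fderiv ℝ h (x + t • v) v - c + L * ‖v‖ ^ 2 * t) t := by
    intro t
    have h1 : HasDerivAt (fun t : ℝ => x + t • v) v t := by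
      simpa using ((hasDerivAt_id t).smul_const v).const_add x
    have h2 : HasDerivAt (fun t : ℝ => h (x + t • v)) (fderiv ℝ h (x + t • v) v) t :=
      (hdiff (x + t • v)).hasFDerivAt.comp_hasDerivAt t h1
    have h3 : HasDerivAt (fun t : ℝ => t * c) c t := by
      simpa using (hasDerivAt_id t).mul_const c
    have h4 : HasDerivAt (fun t : ℝ => L * ‖v‖ ^ 2 / 2 * t ^ 2)
        (L * ‖v‖ ^ 2 / 2 * (2 * t)) t := by
      simpa using (hasDerivAt_pow 2 t).const_mul (L * ‖v‖ ^ 2 / 2)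
    have := (h2.sub h3).add h4
    exact this.congr_deriv (by ring)
  have hmono : MonotoneOn ψ (Set.Icc (0:ℝ) 1) := by
    apply monotoneOn_of_deriv_nonneg (convex_Icc 0 1)
    · exact fun t _ => (hder t).continuousAt.continuousWithinAt
    · exact fun t _ => ((hder t).differentiableAt).differentiableWithinAt
    · intro t ht
      rw [interior_Icc] at ht
      rw [(hder t).deriv]
      have hb : ‖fderiv ℝ h (x + t • v) - fderiv ℝ h x‖ ≤ L * ‖t • v‖ := by
        have := hLip.dist_le_mul (x + t • v) x
        simpa [dist_eq_norm, Real.coe_toNNReal L hL] using this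
      have hb2 : |fderiv ℝ h (x + t • v) v - fderiv ℝ h x v| ≤ L * ‖t • v‖ * ‖v‖ := by
        calc |fderiv ℝ h (x + t • v) v - fderiv ℝ h x v|
            = ‖(fderiv ℝ h (x + t • v) - fderiv ℝ h x) v‖ := by
              simp [Real.norm_eq_abs]
          _ ≤ ‖fderiv ℝ h (x + t • v) - fderiv ℝ h x‖ * ‖v‖ :=
              (fderiv ℝ h (x + t • v) - fderiv ℝ h x).le_opNorm v
          _ ≤ L * ‖t • v‖ * ‖v‖ := by
              exact mul_le_mul_of_nonneg_right hb (norm_nonneg v)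
      have htv : ‖t • v‖ = t * ‖v‖ := by
        rw [norm_smul, Real.norm_eq_abs, abs_of_pos ht.1]
      rw [htv] at hb2
      have := abs_le.1 hb2
      nlinarith [this.1]
  have h01 : ψ 0 ≤ ψ 1 := hmono (by simp) (by simp) zero_le_one
  have e0 : ψ 0 = h x := by simp [hψ]
  have e1 : ψ 1 = h (x + v) - c + L * ‖v‖ ^ 2 / 2 := by simp [hψ]
  rw [e0, e1] at h01
  linarith

theorem euler_step_barrier_bound
    {n m : ℕ}
    (h : EuclideanSpace ℝ (Fin n) → ℝ) (hC1 : ContDiff ℝ 1 h)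
    (L : ℝ) (hL : 0 ≤ L)
    (hLip : LipschitzWith L.toNNReal (fun x => fderiv ℝ h x))
    (f : EuclideanSpace ℝ (Fin n) → EuclideanSpace ℝ (Fin n))
    (g : EuclideanSpace ℝ (Fin n) → EuclideanSpace ℝ (Fin m) →L[ℝ] EuclideanSpace ℝ (Fin n))
    (xk xk1 : EuclideanSpace ℝ (Fin n)) (uk : EuclideanSpace ℝ (Fin m))
    (α Δt M : ℝ) (hα : 0 < α) (hΔt : 0 < Δt) (hstep : α * Δt ≤ 1)
    (hbar : fderiv ℝ h xk (f xk + g xk uk) ≥ -α * h xk)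
    (hvel : ‖f xk + g xk uk‖ ≤ M)
    (hupd : xk1 = xk + Δt • (f xk + g xk uk)) :
    h xk1 ≥ (1 - α * Δt) * h xk - (L * M ^ 2 / 2) * Δt ^ 2 := by
  set w := f xk + g xk uk with hw
  have key := descent_lemma h hC1 L hL hLip xk (Δt • w)
  rw [← hupd] at key
  have hfd : fderiv ℝ h xk (Δt • w) = Δt * fderiv ℝ h xk w := by
    rw [map_smul]; rfl
  have hnorm : ‖Δt • w‖ ^ 2 ≤ Δt ^ 2 * M ^ 2 := by
    rw [norm_smul, Real.norm_eq_abs, abs_of_pos hΔt]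
    have h0 : (0:ℝ) ≤ ‖w‖ := norm_nonneg w
    have : ‖w‖ ^ 2 ≤ M ^ 2 := pow_le_pow_left₀ h0 hvel 2
    nlinarith
  rw [hfd] at key
  have hbar' : Δt * fderiv ℝ h xk w ≥ Δt * (-α * h xk) :=
    mul_le_mul_of_nonneg_left hbar hΔt.le
  nlinarith [key, hbar', hnorm]
end
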